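/- For every subset B ⊂ ℍ and every directed edge e⃗ = x → y with x ∈ B, y ∈ ℍ \ B and |x − y| = 1, the limit H_B(e⃗) = lim_{N→∞} H_{B,N}(e⃗) exists and is finite, where H_{B,N}(e⃗) = Σ_{z ∈ L_N \ B} P_z(S_{τ̄_{B ∪ L_0}} = x and S_{τ̄_{B ∪ L_0} − 1} = y). -/

import Mathlib

open Filter

namespace SHM

/-- The upper half planar lattice `ℍ = {(x₁,x₂) ∈ ℤ² : x₂ ≥ 0}` (including the x-axis). -/
def upperH : Set (ℤ × ℤ) := {p | 0 ≤ p.2}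

/-- The horizontal line `L_n = {(x,n) : x ∈ ℤ}` of height `n`. -/
def lineH (n : ℤ) : Set (ℤ × ℤ) := {p | p.2 = n}

/-- The four unit steps of the planar simple random walk. -/
def dirs : Finset (ℤ × ℤ) := {(1,0), (-1,0), (0,1), (0,-1)}

/-- The position after `m` steps of the walk started at `z` whose first `n`
increments are given by `σ`. -/
def pos (z : ℤ × ℤ) {n : ℕ} (σ : Fin n → ℤ × ℤ) (m : ℕ) : ℤ × ℤ :=
  z + ∑ i ∈ Finset.univ.filter (fun i : Fin n => (i : ℕ) < m), σ i

/-- The probability that the first `n` increments of the simple random walk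
(each uniform on the four unit vectors) satisfy the predicate `E`. -/
noncomputable def stepProb (n : ℕ) (E : (Fin n → ℤ × ℤ) → Prop) : ℝ :=
  (Nat.card {σ : Fin n → ↥dirs // E fun i => ((σ i : ℤ × ℤ))} : ℝ) / 4 ^ n

/-- `P_z(S_{τ̄_A} = x)` : the walk started at `z` hits `A` (in finite time) for the
first time precisely at the point `x`.  Here `τ̄_A = min {m ≥ 0 : S_m ∈ A}`. -/
noncomputable def hitProb (z : ℤ × ℤ) (A : Set (ℤ × ℤ)) (x : ℤ × ℤ) : ℝ :=
  ∑' n : ℕ, stepProb n fun σ =>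
    pos z σ n = x ∧ x ∈ A ∧ ∀ m < n, pos z σ m ∉ A

/-- `P_z(τ̄_A < τ̄_B)` : the walk started at `z` hits `A` strictly before hitting `B`. -/
noncomputable def hitBeforeProb (z : ℤ × ℤ) (A B : Set (ℤ × ℤ)) : ℝ :=
  ∑' n : ℕ, stepProb n fun σ =>
    pos z σ n ∈ A ∧ pos z σ n ∉ B ∧ ∀ m < n, pos z σ m ∉ A ∧ pos z σ m ∉ B

/-- The stationary harmonic measure `H_{B,N}(x) = Σ_{z ∈ L_N \ B} P_z(S_{τ̄_{B ∪ L₀}} = x)`. -/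
noncomputable def harm (B : Set (ℤ × ℤ)) (N : ℕ) (x : ℤ × ℤ) : ℝ :=
  ∑' z : ↥(lineH (N : ℤ) \ B), hitProb (z : ℤ × ℤ) (B ∪ lineH 0) x

/-- `P_z(S_{τ̄_A} = x, S_{τ̄_A − 1} = y)` : the walk started at `z` hits `A` for the first
time (in finite time, at a positive time) at the point `x`, coming from the point `y`. -/
noncomputable def edgeHitProb (z : ℤ × ℤ) (A : Set (ℤ × ℤ)) (x y : ℤ × ℤ) : ℝ :=
  ∑' n : ℕ, stepProb n fun σ =>
    0 < n ∧ pos z σ n = x ∧ x ∈ A ∧ pos z σ (n - 1) = y ∧ ∀ m < n, pos z σ m ∉ A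

/-- `H_{B,N}(e⃗) = Σ_{z ∈ L_N \ B} P_z(S_{τ̄_{B∪L₀}} = x, S_{τ̄_{B∪L₀}−1} = y)` for the
directed edge `e⃗ = x → y`. -/
noncomputable def harmEdge (B : Set (ℤ × ℤ)) (N : ℕ) (x y : ℤ × ℤ) : ℝ :=
  ∑' z : ↥(lineH (N : ℤ) \ B), edgeHitProb (z : ℤ × ℤ) (B ∪ lineH 0) x y

lemma pos_zero (z : ℤ × ℤ) {n : ℕ} (σ : Fin n → ℤ × ℤ) : pos z σ 0 = z := by
  simp [pos]

lemma pos_succ (z : ℤ × ℤ) {n : ℕ} (σ : Fin n → ℤ × ℤ) {m : ℕ} (h : m < n) :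
    pos z σ (m+1) = pos z σ m + σ ⟨m, h⟩ := by
  have : (Finset.univ.filter (fun i : Fin n => (i : ℕ) < m + 1))
      = insert ⟨m, h⟩ (Finset.univ.filter (fun i : Fin n => (i : ℕ) < m)) := by
    ext i
    simp only [Finset.mem_filter, Finset.mem_univ, true_and, Finset.mem_insert]
    constructor
    · intro hi
      rcases Nat.lt_succ_iff_lt_or_eq.mp hi with h' | h'
      · exact Or.inr h'
      · exact Or.inl (Fin.ext h')
    · rintro (rfl | hi)
      · exact Nat.lt_succ_self m
      · exact Nat.lt_succ_of_lt hi
  rw [pos, this, Finset.sum_insert (by simp), pos]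
  ring

lemma pos_congr (z : ℤ × ℤ) {n n' m : ℕ} (σ : Fin n → ℤ × ℤ) (τ : Fin n' → ℤ × ℤ)
    (hm : m ≤ n) (hm' : m ≤ n')
    (hag : ∀ i (hi : i < m), σ ⟨i, lt_of_lt_of_le hi hm⟩ = τ ⟨i, lt_of_lt_of_le hi hm'⟩) :
    pos z σ m = pos z τ m := by
  induction m with
  | zero => rw [pos_zero, pos_zero]
  | succ k ih =>
    rw [pos_succ z σ (lt_of_lt_of_le (Nat.lt_succ_self k) hm),
      pos_succ z τ (lt_of_lt_of_le (Nat.lt_succ_self k) hm'),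
      ih (le_of_lt hm) (le_of_lt hm') (fun i hi => hag i (Nat.lt_succ_of_lt hi)),
      hag k (Nat.lt_succ_self k)]


lemma mem_dirs_iff (d : ℤ × ℤ) : d ∈ dirs ↔ d = (1,0) ∨ d = (-1,0) ∨ d = (0,1) ∨ d = (0,-1) := by
  simp [dirs]

lemma neg_mem_dirs {d : ℤ × ℤ} (hd : d ∈ dirs) : -d ∈ dirs := by
  rcases (mem_dirs_iff d).mp hd with rfl | rfl | rfl | rfl <;> simp [mem_dirs_iff, Prod.ext_iff]

lemma dirs_bound {d : ℤ × ℤ} (hd : d ∈ dirs) :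
    (-1 ≤ d.1 ∧ d.1 ≤ 1) ∧ (-1 ≤ d.2 ∧ d.2 ≤ 1) := by
  rcases (mem_dirs_iff d).mp hd with rfl | rfl | rfl | rfl <;> norm_num

lemma step_mem_dirs {x y : ℤ × ℤ} (hxy : (x.1 - y.1).natAbs + (x.2 - y.2).natAbs = 1) :
    x - y ∈ dirs := by
  rw [mem_dirs_iff]
  have h1 : x.1 - y.1 = 1 ∧ x.2 - y.2 = 0 ∨ x.1 - y.1 = -1 ∧ x.2 - y.2 = 0 ∨
      x.1 - y.1 = 0 ∧ x.2 - y.2 = 1 ∨ x.1 - y.1 = 0 ∧ x.2 - y.2 = -1 := by omega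
  rcases h1 with ⟨h, h'⟩ | ⟨h, h'⟩ | ⟨h, h'⟩ | ⟨h, h'⟩ <;>
    simp [Prod.ext_iff, Prod.fst_sub, Prod.snd_sub, h, h']

/-- number of `k`-step paths from `y` to `w` avoiding `A` at all times `0..k`. -/
noncomputable def cnt (A : Set (ℤ × ℤ)) (y : ℤ × ℤ) (k : ℕ) (w : ℤ × ℤ) : ℕ :=
  Nat.card {σ : Fin k → ↥dirs //
    pos y (fun i => ((σ i : ℤ × ℤ))) k = w ∧ ∀ m ≤ k, pos y (fun i => ((σ i : ℤ × ℤ))) m ∉ A}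

lemma cnt_of_mem (A : Set (ℤ × ℤ)) (y : ℤ × ℤ) (k : ℕ) {w : ℤ × ℤ} (hw : w ∈ A) :
    cnt A y k w = 0 := by
  have : IsEmpty {σ : Fin k → ↥dirs //
      pos y (fun i => ((σ i : ℤ × ℤ))) k = w ∧ ∀ m ≤ k, pos y (fun i => ((σ i : ℤ × ℤ))) m ∉ A} := by
    constructor
    rintro ⟨σ, h1, h2⟩
    exact h2 k le_rfl (h1 ▸ hw)
  exact Nat.card_of_isEmpty

lemma cnt_zero (A : Set (ℤ × ℤ)) {y : ℤ × ℤ} (hyA : y ∉ A) (w : ℤ × ℤ) :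
    cnt A y 0 w = if w = y then 1 else 0 := by
  split_ifs with h
  · subst h
    have : ∀ σ : Fin 0 → ↥dirs,
        pos w (fun i => ((σ i : ℤ × ℤ))) 0 = w ∧ ∀ m ≤ 0, pos w (fun i => ((σ i : ℤ × ℤ))) m ∉ A := by
      intro σ
      refine ⟨pos_zero _ _, ?_⟩
      intro m hm
      interval_cases m
      rw [pos_zero]
      exact hyA
    rw [cnt, Nat.card_congr (Equiv.subtypeUnivEquiv this)]
    exact Nat.card_eq_one_iff_unique.mpr ⟨inferInstance, inferInstance⟩
  · have : IsEmpty {σ : Fin 0 → ↥dirs //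
        pos y (fun i => ((σ i : ℤ × ℤ))) 0 = w ∧ ∀ m ≤ 0, pos y (fun i => ((σ i : ℤ × ℤ))) m ∉ A} := by
      constructor
      rintro ⟨σ, h1, -⟩
      rw [pos_zero] at h1
      exact h (h1.symm)
    exact Nat.card_of_isEmpty

attribute [local instance] Classical.propDecidable

lemma pos_snoc_prefix (y : ℤ × ℤ) {k : ℕ} (τ : Fin k → ↥dirs) (d : ↥dirs) {m : ℕ} (hm : m ≤ k) :
    pos y (fun i => ((@Fin.snoc k (fun _ => ↥dirs) τ d i : ↥dirs) : ℤ × ℤ)) m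
      = pos y (fun i => ((τ i : ℤ × ℤ))) m := by
  apply pos_congr y _ _ (le_trans hm (Nat.le_succ k)) hm
  intro i hi
  exact congrArg Subtype.val (@Fin.snoc_castSucc k (fun _ => ↥dirs) d τ ⟨i, lt_of_lt_of_le hi hm⟩)

lemma pos_init_prefix (y : ℤ × ℤ) {k : ℕ} (σ : Fin (k+1) → ↥dirs) {m : ℕ} (hm : m ≤ k) :
    pos y (fun i => ((@Fin.init k (fun _ => ↥dirs) σ i : ↥dirs) : ℤ × ℤ)) m
      = pos y (fun i => ((σ i : ℤ × ℤ))) m := by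
  apply pos_congr y _ _ hm (le_trans hm (Nat.le_succ k))
  intro i hi
  rfl

lemma cnt_succ (A : Set (ℤ × ℤ)) (y : ℤ × ℤ) (k : ℕ) {w : ℤ × ℤ} (hw : w ∉ A) :
    cnt A y (k+1) w = ∑ d : ↥dirs, cnt A y k (w - (d : ℤ × ℤ)) := by
  classical
  let e : {σ : Fin (k+1) → ↥dirs //
      pos y (fun i => ((σ i : ℤ × ℤ))) (k+1) = w ∧
        ∀ m ≤ k+1, pos y (fun i => ((σ i : ℤ × ℤ))) m ∉ A}
      ≃ (Σ d : ↥dirs, {τ : Fin k → ↥dirs //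
      pos y (fun i => ((τ i : ℤ × ℤ))) k = w - (d : ℤ × ℤ) ∧
        ∀ m ≤ k, pos y (fun i => ((τ i : ℤ × ℤ))) m ∉ A}) :=
  { toFun := fun s => ⟨s.1 (Fin.last k), @Fin.init k (fun _ => ↥dirs) s.1, by
        have hs : pos y (fun i => ((s.1 i : ℤ × ℤ))) (k+1)
            = pos y (fun i => ((s.1 i : ℤ × ℤ))) k + (s.1 (Fin.last k) : ℤ × ℤ) :=
          pos_succ y _ (Nat.lt_succ_self k)
        have hs2 : w = pos y (fun i => ((s.1 i : ℤ × ℤ))) k + (s.1 (Fin.last k) : ℤ × ℤ) := by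
          rw [← hs]; exact s.2.1.symm
        rw [pos_init_prefix y s.1 le_rfl]
        exact eq_sub_iff_add_eq.mpr hs2.symm, by
        intro m hm
        rw [pos_init_prefix y s.1 hm]
        exact s.2.2 m (le_trans hm (Nat.le_succ k))⟩
    invFun := fun t => ⟨@Fin.snoc k (fun _ => ↥dirs) t.2.1 t.1, by
        rw [pos_succ y _ (Nat.lt_succ_self k)]
        have h3 : ((@Fin.snoc k (fun _ => ↥dirs) t.2.1 t.1 (⟨k, Nat.lt_succ_self k⟩ : Fin (k+1)) : ↥dirs) : ℤ × ℤ)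
            = (t.1 : ℤ × ℤ) :=
          congrArg Subtype.val (@Fin.snoc_last k (fun _ => ↥dirs) t.1 t.2.1)
        rw [h3, pos_snoc_prefix y t.2.1 t.1 le_rfl, t.2.2.1]
        ring, by
        intro m hm
        rcases Nat.lt_succ_iff_lt_or_eq.mp (Nat.lt_succ_of_le hm) with hm' | hm'
        · rw [pos_snoc_prefix y t.2.1 t.1 (Nat.lt_succ_iff.mp hm')]
          exact t.2.2.2 m (Nat.lt_succ_iff.mp hm')
        · subst hm'
          rw [pos_succ y _ (Nat.lt_succ_self k)]
          have h3 : ((@Fin.snoc k (fun _ => ↥dirs) t.2.1 t.1 (⟨k, Nat.lt_succ_self k⟩ : Fin (k+1)) : ↥dirs) : ℤ × ℤ)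
              = (t.1 : ℤ × ℤ) :=
            congrArg Subtype.val (@Fin.snoc_last k (fun _ => ↥dirs) t.1 t.2.1)
          rw [h3, pos_snoc_prefix y t.2.1 t.1 le_rfl, t.2.2.1]
          have h4 : w - (t.1 : ℤ × ℤ) + (t.1 : ℤ × ℤ) = w := by ring
          rw [h4]
          exact hw⟩
    left_inv := fun s => Subtype.ext (Fin.snoc_init_self s.1)
    right_inv := fun t => Sigma.subtype_ext
      (@Fin.snoc_last k (fun _ => ↥dirs) t.1 t.2.1)
      (@Fin.init_snoc k (fun _ => ↥dirs) t.1 t.2.1) }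
  rw [cnt, Nat.card_congr e, Nat.card_eq_fintype_card, Fintype.card_sigma]
  congr 1
  ext d
  rw [cnt, Nat.card_eq_fintype_card]


/-- `P_y(S_k = w, walk avoids A during [0,k])`. -/
noncomputable def pfun (A : Set (ℤ × ℤ)) (y : ℤ × ℤ) (k : ℕ) (w : ℤ × ℤ) : ℝ :=
  (cnt A y k w : ℝ) / 4 ^ k

lemma pfun_nonneg (A : Set (ℤ × ℤ)) (y : ℤ × ℤ) (k : ℕ) (w : ℤ × ℤ) : 0 ≤ pfun A y k w :=
  div_nonneg (Nat.cast_nonneg _) (by positivity)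

lemma pfun_of_mem (A : Set (ℤ × ℤ)) (y : ℤ × ℤ) (k : ℕ) {w : ℤ × ℤ} (hw : w ∈ A) :
    pfun A y k w = 0 := by
  rw [pfun, cnt_of_mem A y k hw]
  simp

lemma pfun_zero (A : Set (ℤ × ℤ)) {y : ℤ × ℤ} (hyA : y ∉ A) (w : ℤ × ℤ) :
    pfun A y 0 w = if w = y then 1 else 0 := by
  rw [pfun, cnt_zero A hyA w]
  split_ifs <;> simp

lemma pfun_succ (A : Set (ℤ × ℤ)) (y : ℤ × ℤ) (k : ℕ) {w : ℤ × ℤ} (hw : w ∉ A) :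
    pfun A y (k+1) w = (1/4) * ∑ d : ↥dirs, pfun A y k (w - (d : ℤ × ℤ)) := by
  rw [pfun, cnt_succ A y k hw]
  push_cast
  rw [Finset.sum_div, Finset.mul_sum]
  apply Finset.sum_congr rfl
  intro d _
  rw [pfun, pow_succ]
  ring

/-- the box certainly containing the support of `pfun A y k`. -/
noncomputable def box (y : ℤ × ℤ) (k : ℕ) : Finset (ℤ × ℤ) :=
  Finset.Icc (y - ((k : ℤ), (k : ℤ))) (y + ((k : ℤ), (k : ℤ)))

lemma mem_box {y w : ℤ × ℤ} {k : ℕ} :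
    w ∈ box y k ↔ (y.1 - k ≤ w.1 ∧ w.1 ≤ y.1 + k) ∧ (y.2 - k ≤ w.2 ∧ w.2 ≤ y.2 + k) := by
  rw [box, Finset.mem_Icc, Prod.le_def, Prod.le_def]
  constructor
  · rintro ⟨⟨a, b⟩, c, d⟩
    simp only [Prod.fst_sub, Prod.snd_sub, Prod.fst_add, Prod.snd_add] at *
    exact ⟨⟨a, c⟩, b, d⟩
  · rintro ⟨⟨a, b⟩, c, d⟩
    simp only [Prod.fst_sub, Prod.snd_sub, Prod.fst_add, Prod.snd_add] at *
    exact ⟨⟨a, c⟩, b, d⟩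

lemma box_mono {y : ℤ × ℤ} {k : ℕ} : box y k ⊆ box y (k+1) := by
  intro w hw
  rw [mem_box] at hw ⊢
  push_cast at hw ⊢
  omega

lemma cnt_support {A : Set (ℤ × ℤ)} {y : ℤ × ℤ} (hA0 : lineH 0 ⊆ A) (hyA : y ∉ A)
    (hy1 : 1 ≤ y.2) : ∀ k w, cnt A y k w ≠ 0 → w ∈ box y k ∧ 1 ≤ w.2 := by
  intro k
  induction k with
  | zero =>
    intro w hw
    rw [cnt_zero A hyA w] at hw
    split_ifs at hw with h
    · subst h
      refine ⟨?_, hy1⟩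
      rw [mem_box]
      push_cast
      omega
    · exact absurd rfl hw
  | succ k ih =>
    intro w hw
    by_cases hwA : w ∈ A
    · exact absurd (cnt_of_mem A y (k+1) hwA) hw
    · rw [cnt_succ A y k hwA] at hw
      have : ∃ d ∈ (Finset.univ : Finset ↥dirs), cnt A y k (w - (d : ℤ × ℤ)) ≠ 0 := by
        by_contra hcon
        push_neg at hcon
        exact hw (Finset.sum_eq_zero hcon)
      obtain ⟨d, -, hd⟩ := this
      obtain ⟨hbox, hht⟩ := ih (w - (d : ℤ × ℤ)) hd
      have hdb := dirs_bound d.2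
      rw [mem_box] at hbox
      simp only [Prod.fst_sub, Prod.snd_sub] at hbox hht
      have hw2 : 0 ≤ w.2 := by omega
      have hw2' : w.2 ≠ 0 := by
        intro h0
        exact hwA (hA0 (by exact h0))
      constructor
      · rw [mem_box]
        push_cast
        omega
      · omega

lemma pfun_support {A : Set (ℤ × ℤ)} {y : ℤ × ℤ} (hA0 : lineH 0 ⊆ A) (hyA : y ∉ A)
    (hy1 : 1 ≤ y.2) {k : ℕ} {w : ℤ × ℤ} (hw : pfun A y k w ≠ 0) : w ∈ box y k ∧ 1 ≤ w.2 := by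
  apply cnt_support hA0 hyA hy1 k
  intro h
  exact hw (by rw [pfun, h]; simp)


/-- `E_y[h(S_k); walk avoids A during [0,k]]`. -/
noncomputable def wsum (A : Set (ℤ × ℤ)) (y : ℤ × ℤ) (h : ℤ × ℤ → ℝ) (k : ℕ) : ℝ :=
  ∑ w ∈ box y k, pfun A y k w * h w

lemma box_self (y : ℤ × ℤ) : box y 0 = {y} := by
  have : ((0 : ℕ) : ℤ) = 0 := rfl
  rw [box]
  push_cast
  simp

lemma wsum_zero (A : Set (ℤ × ℤ)) {y : ℤ × ℤ} (hyA : y ∉ A) (h : ℤ × ℤ → ℝ) :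
    wsum A y h 0 = h y := by
  rw [wsum, box_self, Finset.sum_singleton, pfun_zero A hyA]
  simp

lemma wsum_nonneg (A : Set (ℤ × ℤ)) (y : ℤ × ℤ) {h : ℤ × ℤ → ℝ} (hh : ∀ w, 0 ≤ h w) (k : ℕ) :
    0 ≤ wsum A y h k :=
  Finset.sum_nonneg fun w _ => mul_nonneg (pfun_nonneg A y k w) (hh w)

lemma add_dir_mem_box {y w : ℤ × ℤ} {k : ℕ} (hw : w ∈ box y k) (d : ↥dirs) :
    w + (d : ℤ × ℤ) ∈ box y (k+1) := by
  have hdb := dirs_bound d.2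
  rw [mem_box] at hw ⊢
  simp only [Prod.fst_add, Prod.snd_add]
  push_cast
  omega

lemma wsum_step {A : Set (ℤ × ℤ)} {y : ℤ × ℤ} (hA0 : lineH 0 ⊆ A) (hyA : y ∉ A)
    (hy1 : 1 ≤ y.2) {h : ℤ × ℤ → ℝ} (hh : ∀ w, 0 ≤ h w) (k : ℕ) :
    wsum A y h (k+1) ≤ (1/4) * ∑ w ∈ box y k, pfun A y k w * (∑ d : ↥dirs, h (w + (d : ℤ × ℤ))) := by
  classical
  have step1 : wsum A y h (k+1)
      ≤ ∑ w ∈ box y (k+1), (1/4) * ∑ d : ↥dirs, pfun A y k (w - (d : ℤ × ℤ)) * h w := by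
    apply Finset.sum_le_sum
    intro w _
    by_cases hwA : w ∈ A
    · rw [pfun_of_mem A y (k+1) hwA, zero_mul]
      apply mul_nonneg (by norm_num)
      exact Finset.sum_nonneg fun d _ => mul_nonneg (pfun_nonneg A y k _) (hh w)
    · rw [pfun_succ A y k hwA, mul_assoc, Finset.sum_mul]
  have step2 : ∀ d : ↥dirs, ∑ w ∈ box y (k+1), pfun A y k (w - (d : ℤ × ℤ)) * h w
      = ∑ u ∈ box y k, pfun A y k u * h (u + (d : ℤ × ℤ)) := by
    intro d
    have himg : (box y k).image (· + (d : ℤ × ℤ)) ⊆ box y (k+1) := by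
      intro w hw
      obtain ⟨u, hu, rfl⟩ := Finset.mem_image.mp hw
      exact add_dir_mem_box hu d
    rw [← Finset.sum_subset himg ?van]
    · rw [Finset.sum_image ?inj]
      · apply Finset.sum_congr rfl
        intro u _
        congr 1
        congr 1
        ring
      · intro a _ b _ hab
        exact add_right_cancel hab
    · intro w _ hw
      by_cases hp : pfun A y k (w - (d : ℤ × ℤ)) = 0
      · rw [hp, zero_mul]
      · exfalso
        apply hw
        apply Finset.mem_image.mpr
        refine ⟨w - (d : ℤ × ℤ), (pfun_support hA0 hyA hy1 hp).1, by ring⟩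
  calc wsum A y h (k+1)
      ≤ ∑ w ∈ box y (k+1), (1/4) * ∑ d : ↥dirs, pfun A y k (w - (d : ℤ × ℤ)) * h w := step1
    _ = (1/4) * ∑ d : ↥dirs, ∑ w ∈ box y (k+1), pfun A y k (w - (d : ℤ × ℤ)) * h w := by
        rw [← Finset.mul_sum, Finset.sum_comm]
    _ = (1/4) * ∑ d : ↥dirs, ∑ u ∈ box y k, pfun A y k u * h (u + (d : ℤ × ℤ)) := by
        rw [Finset.sum_congr rfl fun d _ => step2 d]
    _ = (1/4) * ∑ w ∈ box y k, pfun A y k w * (∑ d : ↥dirs, h (w + (d : ℤ × ℤ))) := by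
        rw [Finset.sum_comm]
        congr 1
        apply Finset.sum_congr rfl
        intro u _
        rw [Finset.mul_sum]


noncomputable def gN (N : ℤ) (w : ℤ × ℤ) : ℝ := ((4 * min (max w.2 0) N : ℤ) : ℝ)

noncomputable def psiN (N : ℤ) (w : ℤ × ℤ) : ℝ := if N < w.2 then 4 else 0

lemma gN_nonneg (N : ℤ) (hN : 0 ≤ N) (w : ℤ × ℤ) : 0 ≤ gN N w := by
  rw [gN]
  have : (0:ℤ) ≤ 4 * min (max w.2 0) N := by positivity
  exact_mod_cast this

lemma psiN_nonneg (N : ℤ) (w : ℤ × ℤ) : 0 ≤ psiN N w := by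
  rw [psiN]; split_ifs <;> norm_num

lemma sum_dirs_apply (f : ℤ × ℤ → ℝ) (u : ℤ × ℤ) :
    ∑ d : ↥dirs, f (u + (d : ℤ × ℤ))
      = f (u + (1,0)) + f (u + (-1,0)) + f (u + (0,1)) + f (u + (0,-1)) := by
  rw [Finset.sum_coe_sort dirs (fun d => f (u + d))]
  rw [dirs]
  rw [Finset.sum_insert (by decide), Finset.sum_insert (by decide),
    Finset.sum_insert (by decide), Finset.sum_singleton]
  ring

lemma gN_step (N : ℤ) (hN : 0 ≤ N) (u : ℤ × ℤ) (hu : 1 ≤ u.2) :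
    ∑ d : ↥dirs, gN N (u + (d : ℤ × ℤ))
      = 4 * gN N u - 4 * (if u.2 = N then 1 else 0) := by
  rw [sum_dirs_apply]
  have h1 : (u + ((1:ℤ),(0:ℤ))).2 = u.2 := by simp
  have h2 : (u + ((-1:ℤ),(0:ℤ))).2 = u.2 := by simp
  have h3 : (u + ((0:ℤ),(1:ℤ))).2 = u.2 + 1 := by simp
  have h4 : (u + ((0:ℤ),(-1:ℤ))).2 = u.2 - 1 := by
    simp [sub_eq_add_neg]
  rw [gN, gN, gN, gN, gN, h1, h2, h3, h4]
  split_ifs with h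
  · have key : (4 * min (max u.2 0) N) + (4 * min (max u.2 0) N)
        + (4 * min (max (u.2+1) 0) N) + (4 * min (max (u.2-1) 0) N)
        = 4 * (4 * min (max u.2 0) N) - 4 * 1 := by omega
    exact_mod_cast key
  · have key : (4 * min (max u.2 0) N) + (4 * min (max u.2 0) N)
        + (4 * min (max (u.2+1) 0) N) + (4 * min (max (u.2-1) 0) N)
        = 4 * (4 * min (max u.2 0) N) - 4 * 0 := by omega
    exact_mod_cast key

lemma psiN_step (N : ℤ) (hN : 1 ≤ N) (u : ℤ × ℤ) (hu : 1 ≤ u.2) :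
    ∑ d : ↥dirs, psiN N (u + (d : ℤ × ℤ))
      = 4 * psiN N u + 4 * (if u.2 = N then 1 else 0) - 4 * (if u.2 = N + 1 then 1 else 0) := by
  rw [sum_dirs_apply]
  have h1 : (u + ((1:ℤ),(0:ℤ))).2 = u.2 := by simp
  have h2 : (u + ((-1:ℤ),(0:ℤ))).2 = u.2 := by simp
  have h3 : (u + ((0:ℤ),(1:ℤ))).2 = u.2 + 1 := by simp
  have h4 : (u + ((0:ℤ),(-1:ℤ))).2 = u.2 - 1 := by
    simp [sub_eq_add_neg]
  rw [psiN, psiN, psiN, psiN, psiN, h1, h2, h3, h4]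
  split_ifs <;> first | (exfalso; omega) | norm_num

/-- mass on line `N` at time `k` of the `A`-avoiding walk from `y`. -/
noncomputable def vline (A : Set (ℤ × ℤ)) (y : ℤ × ℤ) (N : ℤ) (k : ℕ) : ℝ :=
  ∑ w ∈ (box y k).filter (fun w => w.2 = N), pfun A y k w

lemma vline_nonneg (A : Set (ℤ × ℤ)) (y : ℤ × ℤ) (N : ℤ) (k : ℕ) : 0 ≤ vline A y N k :=
  Finset.sum_nonneg fun w _ => pfun_nonneg A y k w

lemma vline_eq (A : Set (ℤ × ℤ)) (y : ℤ × ℤ) (N : ℤ) (k : ℕ) :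
    vline A y N k = ∑ w ∈ box y k, pfun A y k w * (if w.2 = N then 1 else 0) := by
  classical
  rw [vline, Finset.sum_filter]
  apply Finset.sum_congr rfl
  intro w _
  split_ifs <;> simp

variable {A : Set (ℤ × ℤ)} {y : ℤ × ℤ}

lemma wsum_gN_step (hA0 : lineH 0 ⊆ A) (hyA : y ∉ A) (hy1 : 1 ≤ y.2)
    {N : ℤ} (hN : 0 ≤ N) (k : ℕ) :
    wsum A y (gN N) (k+1) ≤ wsum A y (gN N) k - vline A y N k := by
  classical
  refine le_trans (wsum_step hA0 hyA hy1 (gN_nonneg N hN) k) ?_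
  have hmain : ∀ w ∈ box y k, pfun A y k w * (∑ d : ↥dirs, gN N (w + (d : ℤ × ℤ)))
      = 4 * (pfun A y k w * gN N w - pfun A y k w * (if w.2 = N then 1 else 0)) := by
    intro w _
    by_cases hp : pfun A y k w = 0
    · rw [hp]; ring
    · rw [gN_step N hN w (pfun_support hA0 hyA hy1 hp).2]
      ring
  rw [Finset.sum_congr rfl hmain, ← Finset.mul_sum, Finset.sum_sub_distrib]
  rw [wsum, vline_eq]
  ring_nf
  nlinarith [le_refl (0:ℝ)]

lemma wsum_psiN_step (hA0 : lineH 0 ⊆ A) (hyA : y ∉ A) (hy1 : 1 ≤ y.2)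
    {N : ℤ} (hN : 1 ≤ N) (k : ℕ) :
    wsum A y (psiN N) (k+1) ≤ wsum A y (psiN N) k + vline A y N k - vline A y (N+1) k := by
  classical
  refine le_trans (wsum_step hA0 hyA hy1 (psiN_nonneg N) k) ?_
  have hmain : ∀ w ∈ box y k, pfun A y k w * (∑ d : ↥dirs, psiN N (w + (d : ℤ × ℤ)))
      = 4 * (pfun A y k w * psiN N w + pfun A y k w * (if w.2 = N then 1 else 0)
          - pfun A y k w * (if w.2 = N + 1 then 1 else 0)) := by
    intro w _
    by_cases hp : pfun A y k w = 0
    · rw [hp]; ring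
    · rw [psiN_step N hN w (pfun_support hA0 hyA hy1 hp).2]
      ring
  rw [Finset.sum_congr rfl hmain, ← Finset.mul_sum]
  rw [wsum, vline_eq, vline_eq]
  rw [Finset.sum_sub_distrib, Finset.sum_add_distrib]
  ring_nf
  nlinarith [le_refl (0:ℝ)]

lemma sum_vline_le (hA0 : lineH 0 ⊆ A) (hyA : y ∉ A) (hy1 : 1 ≤ y.2)
    {N : ℤ} (hN : 0 ≤ N) (K : ℕ) :
    ∑ k ∈ Finset.range K, vline A y N k ≤ 4 * (y.2 : ℝ) := by
  have key : ∀ K, ∑ k ∈ Finset.range K, vline A y N k + wsum A y (gN N) K ≤ gN N y := by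
    intro K
    induction K with
    | zero =>
      rw [Finset.sum_range_zero, zero_add, wsum_zero A hyA]
    | succ K ih =>
      rw [Finset.sum_range_succ]
      have := wsum_gN_step hA0 hyA hy1 hN K
      linarith
  have h1 := key K
  have h2 := wsum_nonneg A y (gN_nonneg N hN) K
  have h3 : gN N y ≤ 4 * (y.2 : ℝ) := by
    rw [gN]
    have : (4 * min (max y.2 0) N : ℤ) ≤ 4 * y.2 := by omega
    exact_mod_cast this
  linarith

lemma sum_vline_mono (hA0 : lineH 0 ⊆ A) (hyA : y ∉ A) (hy1 : 1 ≤ y.2)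
    {N : ℤ} (hN : 1 ≤ N) (hyN : y.2 ≤ N) (K : ℕ) :
    ∑ k ∈ Finset.range K, vline A y (N+1) k ≤ ∑ k ∈ Finset.range K, vline A y N k := by
  have key : ∀ K, ∑ k ∈ Finset.range K, vline A y (N+1) k + wsum A y (psiN N) K
      ≤ ∑ k ∈ Finset.range K, vline A y N k := by
    intro K
    induction K with
    | zero =>
      rw [Finset.sum_range_zero, Finset.sum_range_zero, zero_add, wsum_zero A hyA]
      rw [psiN]
      rw [if_neg (by omega)]
    | succ K ih =>
      rw [Finset.sum_range_succ, Finset.sum_range_succ]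
      have := wsum_psiN_step hA0 hyA hy1 hN K
      linarith
  have h1 := key K
  have h2 := wsum_nonneg A y (psiN_nonneg N) K
  linarith


/-- time-reversal of an increment sequence (dropping the final step). -/
def revfun {k : ℕ} (σ : Fin (k+1) → ↥dirs) : Fin k → ↥dirs :=
  fun j => ⟨-((σ ⟨k-1-j.1, by omega⟩ : ℤ × ℤ)), neg_mem_dirs (σ _).2⟩

/-- time-reversal of an increment sequence, appending a final step `x - y`. -/
def extfun {k : ℕ} {x y : ℤ × ℤ} (hd : x - y ∈ dirs) (τ : Fin k → ↥dirs) :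
    Fin (k+1) → ↥dirs :=
  fun i => if h : i.1 < k then ⟨-((τ ⟨k-1-i.1, by omega⟩ : ℤ × ℤ)), neg_mem_dirs (τ _).2⟩
    else ⟨x - y, hd⟩

lemma revfun_pos {k : ℕ} (z y : ℤ × ℤ) (σ : Fin (k+1) → ↥dirs)
    (h3 : pos z (fun i => ((σ i : ℤ × ℤ))) k = y) :
    ∀ j ≤ k, pos y (fun i => ((revfun σ i : ℤ × ℤ))) j
      = pos z (fun i => ((σ i : ℤ × ℤ))) (k - j) := by
  intro j
  induction j with
  | zero =>
    intro _
    rw [pos_zero, Nat.sub_zero, h3]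
  | succ j ih =>
    intro hj
    rw [pos_succ y _ (by omega : j < k), ih (by omega)]
    have hsplit : k - j = (k - 1 - j) + 1 := by omega
    rw [hsplit, pos_succ z _ (by omega : k - 1 - j < k + 1)]
    have hidx : k - (j+1) = k - 1 - j := by omega
    rw [hidx]
    have hval : ((revfun σ ⟨j, by omega⟩ : ℤ × ℤ)) = -((σ ⟨k-1-j, by omega⟩ : ℤ × ℤ)) := rfl
    rw [hval]
    ring

lemma extfun_pos {k : ℕ} {x y : ℤ × ℤ} (hd : x - y ∈ dirs) (τ : Fin k → ↥dirs) (z : ℤ × ℤ)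
    (h1 : pos y (fun i => ((τ i : ℤ × ℤ))) k = z) :
    ∀ m ≤ k, pos z (fun i => ((extfun hd τ i : ℤ × ℤ))) m
      = pos y (fun i => ((τ i : ℤ × ℤ))) (k - m) := by
  intro m
  induction m with
  | zero =>
    intro _
    rw [pos_zero, Nat.sub_zero, h1]
  | succ m ih =>
    intro hm
    rw [pos_succ z _ (by omega : m < k + 1), ih (by omega)]
    have hsplit : k - m = (k - m - 1) + 1 := by omega
    rw [hsplit, pos_succ y _ (by omega : k - m - 1 < k)]
    have hidx2 : k - (m+1) = k - m - 1 := by omega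
    conv_rhs => rw [hidx2]
    have hval : ((extfun hd τ ⟨m, by omega⟩ : ℤ × ℤ)) = -((τ ⟨k-m-1, by omega⟩ : ℤ × ℤ)) := by
      have hmk : ((⟨m, by omega⟩ : Fin (k+1)) : ℕ) < k := by simp only [Fin.val_mk]; omega
      simp only [extfun]
      rw [dif_pos hmk]
      exact congrArg (fun t : ↥dirs => -(t : ℤ × ℤ))
        (congrArg τ (Fin.ext (by simp only [Fin.val_mk]; omega)))
    rw [hval]
    ring

lemma rev_step (A : Set (ℤ × ℤ)) {x y : ℤ × ℤ} (hxA : x ∈ A) (hd : x - y ∈ dirs)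
    (z : ℤ × ℤ) (k : ℕ) :
    stepProb (k+1) (fun σ => 0 < k+1 ∧ pos z σ (k+1) = x ∧ x ∈ A ∧ pos z σ k = y ∧
      ∀ m < k+1, pos z σ m ∉ A)
      = (1/4) * pfun A y k z := by
  classical
  let e : {σ : Fin (k+1) → ↥dirs // 0 < k+1 ∧ pos z (fun i => ((σ i : ℤ × ℤ))) (k+1) = x ∧
      x ∈ A ∧ pos z (fun i => ((σ i : ℤ × ℤ))) k = y ∧
      ∀ m < k+1, pos z (fun i => ((σ i : ℤ × ℤ))) m ∉ A}
      ≃ {τ : Fin k → ↥dirs // pos y (fun i => ((τ i : ℤ × ℤ))) k = z ∧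
      ∀ m ≤ k, pos y (fun i => ((τ i : ℤ × ℤ))) m ∉ A} :=
  { toFun := fun s => ⟨revfun s.1, by
      rw [revfun_pos z y s.1 s.2.2.2.2.1 k le_rfl, Nat.sub_self, pos_zero], by
      intro m hm
      rw [revfun_pos z y s.1 s.2.2.2.2.1 m hm]
      exact s.2.2.2.2.2 (k - m) (by omega)⟩
    invFun := fun t => ⟨extfun hd t.1, Nat.succ_pos k, by
      rw [pos_succ z _ (Nat.lt_succ_self k), extfun_pos hd t.1 z t.2.1 k le_rfl,
        Nat.sub_self, pos_zero]
      have hval : ((extfun hd t.1 ⟨k, Nat.lt_succ_self k⟩ : ℤ × ℤ)) = x - y := by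
        rw [extfun, dif_neg (by simp only [Fin.val_mk]; omega)]
      rw [hval]
      ring, hxA, by
      rw [extfun_pos hd t.1 z t.2.1 k le_rfl, Nat.sub_self, pos_zero], by
      intro m hm
      rw [extfun_pos hd t.1 z t.2.1 m (by omega)]
      exact t.2.2 (k - m) (by omega)⟩
    left_inv := by
      rintro ⟨σ, h0, h1, h2, h3, h4⟩
      apply Subtype.ext
      funext i
      show extfun hd (revfun σ) i = σ i
      by_cases hik : i.1 < k
      · rw [extfun, dif_pos hik]
        apply Subtype.ext
        have hidx : (⟨k-1-(⟨k-1-i.1, by omega⟩ : Fin k).1, by omega⟩ : Fin (k+1)) = i :=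
          Fin.ext (by simp only [Fin.val_mk]; omega)
        show -((revfun σ ⟨k-1-i.1, by omega⟩ : ℤ × ℤ)) = (σ i : ℤ × ℤ)
        rw [revfun]
        show - -((σ ⟨k-1-(⟨k-1-i.1, by omega⟩ : Fin k).1, by omega⟩ : ℤ × ℤ)) = (σ i : ℤ × ℤ)
        rw [hidx, neg_neg]
      · have hik' : i = ⟨k, Nat.lt_succ_self k⟩ := Fin.ext (by
          have := i.2
          simp only [Fin.val_mk]
          omega)
        subst hik'
        rw [extfun, dif_neg hik]
        apply Subtype.ext
        have hx' : pos z (fun i => ((σ i : ℤ × ℤ))) (k+1)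
            = pos z (fun i => ((σ i : ℤ × ℤ))) k + (σ ⟨k, Nat.lt_succ_self k⟩ : ℤ × ℤ) :=
          pos_succ z _ (Nat.lt_succ_self k)
        rw [h1, h3] at hx'
        show x - y = (σ ⟨k, Nat.lt_succ_self k⟩ : ℤ × ℤ)
        rw [hx']
        ring
    right_inv := by
      rintro ⟨τ, h1, h2⟩
      apply Subtype.ext
      funext j
      show revfun (extfun hd τ) j = τ j
      have hjk : ((⟨k-1-j.1, by omega⟩ : Fin (k+1)) : ℕ) < k := by
        have := j.2
        simp only [Fin.val_mk]
        omega
      apply Subtype.ext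
      show -((extfun hd τ ⟨k-1-j.1, by omega⟩ : ℤ × ℤ)) = (τ j : ℤ × ℤ)
      rw [extfun, dif_pos hjk]
      have hidx : (⟨k-1-(⟨k-1-j.1, by omega⟩ : Fin (k+1)).1, by omega⟩ : Fin k) = j :=
        Fin.ext (by
          have := j.2
          simp only [Fin.val_mk]
          omega)
      show - -((τ ⟨k-1-(⟨k-1-j.1, by omega⟩ : Fin (k+1)).1, by omega⟩ : ℤ × ℤ)) = (τ j : ℤ × ℤ)
      rw [hidx, neg_neg] }
  rw [stepProb, Nat.card_congr e]
  rw [show (Nat.card {τ : Fin k → ↥dirs // pos y (fun i => ((τ i : ℤ × ℤ))) k = z ∧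
      ∀ m ≤ k, pos y (fun i => ((τ i : ℤ × ℤ))) m ∉ A}) = cnt A y k z from rfl]
  rw [pfun, pow_succ]
  ring


lemma edgeHitProb_eq (A : Set (ℤ × ℤ)) {x y : ℤ × ℤ} (hxA : x ∈ A) (hd : x - y ∈ dirs)
    (z : ℤ × ℤ) : edgeHitProb z A x y = (1/4) * ∑' k, pfun A y k z := by
  rw [edgeHitProb]
  have h0 : stepProb 0 (fun σ : Fin 0 → ℤ × ℤ =>
      0 < 0 ∧ pos z σ 0 = x ∧ x ∈ A ∧ pos z σ (0 - 1) = y ∧ ∀ m < 0, pos z σ m ∉ A) = 0 := by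
    rw [stepProb]
    have : IsEmpty {σ : Fin 0 → ↥dirs // 0 < 0 ∧
        pos z (fun i => ((σ i : ℤ × ℤ))) 0 = x ∧ x ∈ A ∧
        pos z (fun i => ((σ i : ℤ × ℤ))) (0 - 1) = y ∧
        ∀ m < 0, pos z (fun i => ((σ i : ℤ × ℤ))) m ∉ A} := by
      constructor
      rintro ⟨σ, h, -⟩
      exact absurd h (lt_irrefl 0)
    rw [Nat.card_of_isEmpty]
    simp
  have hre : ∑' n : ℕ, stepProb n (fun σ =>
        0 < n ∧ pos z σ n = x ∧ x ∈ A ∧ pos z σ (n - 1) = y ∧ ∀ m < n, pos z σ m ∉ A)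
      = ∑' k : ℕ, stepProb (k+1) (fun σ =>
        0 < k+1 ∧ pos z σ (k+1) = x ∧ x ∈ A ∧ pos z σ k = y ∧ ∀ m < k+1, pos z σ m ∉ A) := by
    rw [← Function.Injective.tsum_eq (f := fun n => stepProb n (fun σ =>
        0 < n ∧ pos z σ n = x ∧ x ∈ A ∧ pos z σ (n - 1) = y ∧ ∀ m < n, pos z σ m ∉ A))
      Nat.succ_injective ?hsupp]
    · rfl
    · intro n hn
      rcases n with - | k
      · exact absurd h0 hn
      · exact ⟨k, rfl⟩
  rw [hre]
  have hstep : ∀ k : ℕ, stepProb (k+1) (fun σ =>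
      0 < k+1 ∧ pos z σ (k+1) = x ∧ x ∈ A ∧ pos z σ k = y ∧ ∀ m < k+1, pos z σ m ∉ A)
      = (1/4) * pfun A y k z := fun k => rev_step A hxA hd z k
  rw [tsum_congr hstep, tsum_mul_left]

open scoped ENNReal in
noncomputable def qfun (A : Set (ℤ × ℤ)) (y : ℤ × ℤ) (k : ℕ) (w : ℤ × ℤ) : ℝ≥0∞ :=
  (cnt A y k w : ℝ≥0∞) / 4 ^ k

lemma qfun_ne_top (A : Set (ℤ × ℤ)) (y : ℤ × ℤ) (k : ℕ) (w : ℤ × ℤ) : qfun A y k w ≠ ⊤ := by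
  rw [qfun]
  exact (ENNReal.div_lt_top (by simp) (by positivity)).ne

lemma qfun_eq_ofReal (A : Set (ℤ × ℤ)) (y : ℤ × ℤ) (k : ℕ) (w : ℤ × ℤ) :
    qfun A y k w = ENNReal.ofReal (pfun A y k w) := by
  rw [qfun, pfun, ENNReal.ofReal_div_of_pos (by positivity)]
  congr 1
  · rw [ENNReal.ofReal_natCast]
  · rw [ENNReal.ofReal_pow (by norm_num : (0:ℝ) ≤ 4)]
    norm_num

lemma qfun_toReal (A : Set (ℤ × ℤ)) (y : ℤ × ℤ) (k : ℕ) (w : ℤ × ℤ) :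
    (qfun A y k w).toReal = pfun A y k w := by
  rw [qfun_eq_ofReal, ENNReal.toReal_ofReal (pfun_nonneg A y k w)]

open scoped ENNReal

lemma line_qsum {B : Set (ℤ × ℤ)} {y : ℤ × ℤ} (hyA : y ∉ B ∪ lineH 0) (hy1 : 1 ≤ y.2)
    (N : ℤ) (k : ℕ) :
    ∑' (z : ↥(lineH N \ B)), qfun (B ∪ lineH 0) y k (z : ℤ × ℤ)
      = ENNReal.ofReal (vline (B ∪ lineH 0) y N k) := by
  classical
  set A := B ∪ lineH 0 with hA
  have hA0 : lineH 0 ⊆ A := Set.subset_union_right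
  rw [tsum_subtype]
  rw [tsum_eq_sum (s := (box y k).filter (fun w => w.2 = N))
    (f := fun w => Set.indicator (lineH N \ B) (qfun A y k) w) ?vanish]
  · rw [vline, ENNReal.ofReal_sum_of_nonneg (fun w _ => pfun_nonneg A y k w)]
    apply Finset.sum_congr rfl
    intro w hw
    obtain ⟨hbox, hwN⟩ := Finset.mem_filter.mp hw
    by_cases hwB : w ∈ B
    · rw [Set.indicator_of_notMem (fun h => h.2 hwB)]
      rw [pfun_of_mem A y k (Or.inl hwB)]
      simp
    · rw [Set.indicator_of_mem (show w ∈ lineH N \ B from ⟨hwN, hwB⟩) (qfun A y k)]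
      exact qfun_eq_ofReal A y k w
  · intro w hw
    show Set.indicator (lineH N \ B) (qfun A y k) w = 0
    by_cases hS : w ∈ lineH N \ B
    · rw [Set.indicator_of_mem hS]
      have hcnt : cnt A y k w = 0 := by
        by_contra hc
        exact hw (Finset.mem_filter.mpr ⟨(cnt_support hA0 hyA hy1 k w hc).1, hS.1⟩)
      rw [qfun, hcnt]
      simp
    · rw [Set.indicator_of_notMem hS]

lemma summable_vline {B : Set (ℤ × ℤ)} {y : ℤ × ℤ} (hyA : y ∉ B ∪ lineH 0) (hy1 : 1 ≤ y.2)
    {N : ℤ} (hN : 0 ≤ N) : Summable (vline (B ∪ lineH 0) y N) :=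
  summable_of_sum_range_le (fun k => vline_nonneg _ y N k)
    (fun K => sum_vline_le Set.subset_union_right hyA hy1 hN K)

lemma harmEdge_eq (B : Set (ℤ × ℤ)) {x y : ℤ × ℤ} (hxA : x ∈ B ∪ lineH 0)
    (hd : x - y ∈ dirs) (hyA : y ∉ B ∪ lineH 0) (hy1 : 1 ≤ y.2) (N : ℕ) :
    harmEdge B N x y = (1/4) * ∑' k, vline (B ∪ lineH 0) y (N : ℤ) k := by
  classical
  set A := B ∪ lineH 0 with hA
  have hsum : Summable (vline A y (N : ℤ)) := summable_vline hyA hy1 (by positivity)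
  have hnn : 0 ≤ ∑' k, vline A y (N : ℤ) k := tsum_nonneg fun k => vline_nonneg A y _ k
  set F : ↥(lineH (N : ℤ) \ B) → ℝ≥0∞ := fun z => ∑' k, qfun A y k (z : ℤ × ℤ) with hF
  have hQ : ∑' z, F z = ENNReal.ofReal (∑' k, vline A y (N : ℤ) k) := by
    rw [hF]
    rw [ENNReal.tsum_comm]
    rw [tsum_congr (fun k => line_qsum hyA hy1 (N : ℤ) k)]
    rw [← ENNReal.ofReal_tsum_of_nonneg (fun k => vline_nonneg A y _ k) hsum]
  have hQtop : ∑' z, F z ≠ ⊤ := by rw [hQ]; exact ENNReal.ofReal_ne_top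
  have hFz : ∀ z, F z ≠ ⊤ := fun z => ne_top_of_le_ne_top hQtop (ENNReal.le_tsum z)
  have hquarter : ((1/4 : ℝ≥0∞)).toReal = (1/4 : ℝ) := by simp
  calc harmEdge B N x y
      = ∑' z : ↥(lineH (N : ℤ) \ B), (1/4) * ∑' k, pfun A y k (z : ℤ × ℤ) := by
        rw [harmEdge]
        exact tsum_congr fun z => edgeHitProb_eq A hxA hd (z : ℤ × ℤ)
    _ = ∑' z : ↥(lineH (N : ℤ) \ B), ((1/4 : ℝ≥0∞) * F z).toReal := by
        apply tsum_congr
        intro z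
        rw [ENNReal.toReal_mul, hquarter]
        congr 1
        rw [hF]
        rw [ENNReal.tsum_toReal_eq (fun k => qfun_ne_top A y k _)]
        exact tsum_congr fun k => (qfun_toReal A y k _).symm
    _ = (∑' z : ↥(lineH (N : ℤ) \ B), (1/4 : ℝ≥0∞) * F z).toReal := by
        rw [ENNReal.tsum_toReal_eq
          (fun z => ENNReal.mul_ne_top (by norm_num) (hFz z))]
    _ = ((1/4 : ℝ≥0∞) * ∑' z, F z).toReal := by rw [ENNReal.tsum_mul_left]
    _ = (1/4 : ℝ) * (∑' z, F z).toReal := by rw [ENNReal.toReal_mul, hquarter]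
    _ = (1/4) * ∑' k, vline A y (N : ℤ) k := by rw [hQ, ENNReal.toReal_ofReal hnn]


lemma stepProb_nonneg (n : ℕ) (E : (Fin n → ℤ × ℤ) → Prop) : 0 ≤ stepProb n E :=
  div_nonneg (Nat.cast_nonneg _) (by positivity)

lemma edgeHitProb_nonneg (z : ℤ × ℤ) (A : Set (ℤ × ℤ)) (x y : ℤ × ℤ) :
    0 ≤ edgeHitProb z A x y :=
  tsum_nonneg fun n => stepProb_nonneg n _

lemma harmEdge_nonneg (B : Set (ℤ × ℤ)) (N : ℕ) (x y : ℤ × ℤ) : 0 ≤ harmEdge B N x y :=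
  tsum_nonneg fun z => edgeHitProb_nonneg _ _ x y

lemma edgeHitProb_of_mem (z : ℤ × ℤ) (A : Set (ℤ × ℤ)) (x : ℤ × ℤ) {y : ℤ × ℤ} (hy : y ∈ A) :
    edgeHitProb z A x y = 0 := by
  rw [edgeHitProb]
  rw [tsum_congr (fun n => ?_), tsum_zero]
  rw [stepProb]
  have : IsEmpty {σ : Fin n → ↥dirs // 0 < n ∧
      pos z (fun i => ((σ i : ℤ × ℤ))) n = x ∧ x ∈ A ∧
      pos z (fun i => ((σ i : ℤ × ℤ))) (n - 1) = y ∧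
      ∀ m < n, pos z (fun i => ((σ i : ℤ × ℤ))) m ∉ A} := by
    constructor
    rintro ⟨σ, hn, -, -, hy', havoid⟩
    exact havoid (n-1) (by omega) (hy' ▸ hy)
  rw [Nat.card_of_isEmpty]
  simp

lemma tsum_vline_mono {B : Set (ℤ × ℤ)} {y : ℤ × ℤ} (hyA : y ∉ B ∪ lineH 0) (hy1 : 1 ≤ y.2)
    {N : ℤ} (hN : 1 ≤ N) (hyN : y.2 ≤ N) :
    ∑' k, vline (B ∪ lineH 0) y (N+1) k ≤ ∑' k, vline (B ∪ lineH 0) y N k := by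
  have h1 : Summable (vline (B ∪ lineH 0) y (N+1)) := summable_vline hyA hy1 (by omega)
  have h2 : Summable (vline (B ∪ lineH 0) y N) := summable_vline hyA hy1 (by omega)
  refine le_of_tendsto_of_tendsto' h1.hasSum.tendsto_sum_nat h2.hasSum.tendsto_sum_nat ?_
  intro K
  exact sum_vline_mono Set.subset_union_right hyA hy1 hN hyN K

theorem harmEdge_tendsto' (B : Set (ℤ × ℤ)) (hB : B ⊆ upperH)
    (x y : ℤ × ℤ) (hx : x ∈ B) (hy : y ∈ upperH \ B)
    (hxy : (x.1 - y.1).natAbs + (x.2 - y.2).natAbs = 1) :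
    ∃ l : ℝ, Tendsto (fun N : ℕ => harmEdge B N x y) atTop (nhds l) := by
  by_cases hy0 : y.2 = 0
  · refine ⟨0, ?_⟩
    have : ∀ N : ℕ, harmEdge B N x y = 0 := by
      intro N
      rw [harmEdge]
      rw [tsum_congr (fun z => edgeHitProb_of_mem _ _ x (Or.inr hy0)), tsum_zero]
    simp only [this]
    exact tendsto_const_nhds
  · have hy1 : 1 ≤ y.2 := by
      have h02 : (0:ℤ) ≤ y.2 := hy.1
      omega
    have hyA : y ∉ B ∪ lineH 0 := by
      rintro (h | h)
      · exact hy.2 h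
      · exact hy0 h
    have hxA : x ∈ B ∪ lineH 0 := Or.inl hx
    have hd : x - y ∈ dirs := step_mem_dirs hxy
    set c : ℕ := y.2.toNat with hc
    have hcy : (c : ℤ) = y.2 := Int.toNat_of_nonneg (by omega)
    have hc1 : 1 ≤ c := by omega
    have hanti : ∀ M : ℕ, harmEdge B (M + 1 + c) x y ≤ harmEdge B (M + c) x y := by
      intro M
      rw [harmEdge_eq B hxA hd hyA hy1 (M + 1 + c), harmEdge_eq B hxA hd hyA hy1 (M + c)]
      have hcast : ((M + 1 + c : ℕ) : ℤ) = ((M + c : ℕ) : ℤ) + 1 := by push_cast; ring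
      rw [hcast]
      have hmono := tsum_vline_mono hyA hy1 (N := ((M + c : ℕ) : ℤ)) (by
          push_cast; omega) (by push_cast; omega)
      linarith
    set g : ℕ → ℝ := fun M => harmEdge B (M + c) x y with hg
    have hganti : Antitone g := antitone_nat_of_succ_le (fun M => by
      have := hanti M
      simpa [hg, Nat.add_right_comm M 1 c] using this)
    have hgbdd : BddBelow (Set.range g) := by
      refine ⟨0, ?_⟩
      rintro r ⟨M, rfl⟩
      exact harmEdge_nonneg B (M + c) x y
    refine ⟨⨅ M, g M, ?_⟩
    have := tendsto_atTop_ciInf hganti hgbdd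
    exact (tendsto_add_atTop_iff_nat c).mp this


/-- **Proposition 1.** For every `B ⊂ ℍ` and every directed edge `e⃗ = x → y` with `x ∈ B`,
`y ∈ ℍ \ B` and `|x − y| = 1`, the limit `H_B(e⃗) = lim_{N→∞} H_{B,N}(e⃗)` exists and
is finite. -/
theorem harmEdge_tendsto (B : Set (ℤ × ℤ)) (hB : B ⊆ upperH)
    (x y : ℤ × ℤ) (hx : x ∈ B) (hy : y ∈ upperH \ B)
    (hxy : (x.1 - y.1).natAbs + (x.2 - y.2).natAbs = 1) :
    ∃ l : ℝ, Tendsto (fun N : ℕ => harmEdge B N x y) atTop (nhds l) :=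
  harmEdge_tendsto' B hB x y hx hy hxy

end SHM
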